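/- Let (X, ≤) be a lower 1-transitive linear order and define x ∼fin y iff the closed interval between x and y is finite. Then each equivalence class of ∼fin, regarded as a suborder of X, is a singleton, or order-isomorphic to ℕᵒᵈ (order type ω*), or order-isomorphic to ℤ. Moreover, if some class is a singleton then every class is a singleton. -/

import Mathlib

/-- A linear order is lower 1-transitive if any two of its initial segments
are order-isomorphic. -/
def LowerOneTransitive (X : Type*) [LinearOrder X] : Prop :=
  ∀ a b : X, Nonempty (Set.Iic a ≃o Set.Iic b)

/-- `x ∼fin y` iff the closed interval between `x` and `y` is finite. -/
def SimFin {X : Type*} [LinearOrder X] (x y : X) : Prop :=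
  (x ≤ y ∧ (Set.Icc x y).Finite) ∨ (y ≤ x ∧ (Set.Icc y x).Finite)

open Set Function

section Aux

variable {X : Type*} [LinearOrder X]

lemma simFin_iff_uIcc {x y : X} : SimFin x y ↔ (Set.uIcc x y).Finite := by
  rcases le_total x y with h | h
  · rw [Set.uIcc_of_le h]
    constructor
    · rintro (⟨_, hf⟩ | ⟨h', hf⟩)
      · exact hf
      · have : x = y := le_antisymm h h'
        subst this; exact hf
    · intro hf; exact Or.inl ⟨h, hf⟩
  · rw [Set.uIcc_comm, Set.uIcc_of_le h]
    constructor
    · rintro (⟨h', hf⟩ | ⟨_, hf⟩)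
      · have : y = x := le_antisymm h h'
        subst this; exact hf
      · exact hf
    · intro hf; exact Or.inr ⟨h, hf⟩

lemma simFin_refl (x : X) : SimFin x x := by
  rw [simFin_iff_uIcc, Set.uIcc_self]; exact Set.finite_singleton x

lemma simFin_symm {x y : X} (h : SimFin x y) : SimFin y x := by
  rw [simFin_iff_uIcc] at h ⊢; rwa [Set.uIcc_comm]

lemma simFin_trans {x y z : X} (h1 : SimFin x y) (h2 : SimFin y z) : SimFin x z := by
  rw [simFin_iff_uIcc] at h1 h2 ⊢
  exact (h1.union h2).subset Set.uIcc_subset_uIcc_union_uIcc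

lemma simFin_of_covBy {a b : X} (h : a ⋖ b) : SimFin a b := by
  refine Or.inl ⟨h.le, ?_⟩
  refine ((Set.finite_singleton b).insert a).subset ?_
  intro w hw
  rcases eq_or_lt_of_le hw.1 with he | hl
  · exact Or.inl he.symm
  · rcases eq_or_lt_of_le hw.2 with he | hl'
    · exact Or.inr he
    · exact absurd hl' (h.2 hl)

lemma covBy_unique_left {a b c : X} (h1 : a ⋖ c) (h2 : b ⋖ c) : a = b := by
  rcases lt_trichotomy a b with h | h | h
  · exact absurd h2.lt (h1.2 h)
  · exact h
  · exact absurd h1.lt (h2.2 h)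

lemma covBy_unique_right {a b c : X} (h1 : a ⋖ b) (h2 : a ⋖ c) : b = c := by
  rcases lt_trichotomy b c with h | h | h
  · exact absurd h (h2.2 h1.lt)
  · exact h
  · exact absurd h (h1.2 h2.lt)

open Classical in
noncomputable def prX (z : X) : X := if h : ∃ w, w ⋖ z then h.choose else z

open Classical in
noncomputable def suX (z : X) : X := if h : ∃ w, z ⋖ w then h.choose else z

lemma prX_covBy {z : X} (h : ∃ w, w ⋖ z) : prX z ⋖ z := by
  unfold prX; rw [dif_pos h]; exact h.choose_spec

lemma suX_covBy {z : X} (h : ∃ w, z ⋖ w) : z ⋖ suX z := by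
  unfold suX; rw [dif_pos h]; exact h.choose_spec

lemma prX_eq {w z : X} (h : w ⋖ z) : prX z = w :=
  covBy_unique_left (prX_covBy ⟨w, h⟩) h

lemma suX_eq {w z : X} (h : z ⋖ w) : suX z = w :=
  covBy_unique_right (suX_covBy ⟨w, h⟩) h

/-- a finite nonempty interval has a coatom below its top -/
lemma exists_covBy_below {y z : X} (h : y < z) (hf : (Set.Icc y z).Finite) :
    ∃ w, y ≤ w ∧ w ⋖ z := by
  have hfin : (Set.Ico y z).Finite := hf.subset Set.Ico_subset_Icc_self
  obtain ⟨m, hm, hmax⟩ := Set.exists_max_image (Set.Ico y z) id hfin ⟨y, le_rfl, h⟩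
  refine ⟨m, hm.1, hm.2, ?_⟩
  intro c hc hcz
  exact absurd (hmax c ⟨hm.1.trans hc.le, hcz⟩) (not_le.2 hc)

lemma exists_covBy_above {y z : X} (h : y < z) (hf : (Set.Icc y z).Finite) :
    ∃ w, w ≤ z ∧ y ⋖ w := by
  have hfin : (Set.Ioc y z).Finite := hf.subset Set.Ioc_subset_Icc_self
  obtain ⟨m, hm, hmin⟩ := Set.exists_max_image (Set.Ioc y z) (OrderDual.toDual ∘ id) hfin ⟨z, h, le_rfl⟩
  refine ⟨m, hm.2, hm.1, ?_⟩
  intro c hc hcm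
  exact absurd (hmin c ⟨hc, hcm.le.trans hm.2⟩) (not_le.2 hcm)

lemma pred_iter_eq : ∀ (k : ℕ) {y z : X}, y ≤ z → (Set.Icc y z).Finite →
    (Set.Icc y z).ncard = k + 1 → prX^[k] z = y := by
  intro k
  induction k with
  | zero =>
    intro y z hle hf hc
    rcases eq_or_lt_of_le hle with he | hlt
    · simp [he]
    · exfalso
      have hsub : ({y, z} : Set X) ⊆ Set.Icc y z := by
        intro w hw; rcases hw with rfl | rfl
        · exact ⟨le_rfl, hle⟩
        · exact ⟨hle, le_rfl⟩
      have h2 : ({y, z} : Set X).ncard = 2 := Set.ncard_pair hlt.ne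
      have := Set.ncard_le_ncard hsub hf
      omega
  | succ k ih =>
    intro y z hle hf hc
    have hne : y ≠ z := by
      rintro rfl
      rw [Set.Icc_self, Set.ncard_singleton] at hc
      omega
    have hlt : y < z := lt_of_le_of_ne hle hne
    obtain ⟨m, hym, hm⟩ := exists_covBy_below hlt hf
    have hem : Set.Icc y m = Set.Icc y z \ {z} := by
      ext w
      constructor
      · intro hw
        exact ⟨⟨hw.1, hw.2.trans hm.le⟩, fun he => absurd (he ▸ hw.2) (not_le.2 hm.lt)⟩
      · rintro ⟨hw, hwz⟩
        have hwlt : w < z := lt_of_le_of_ne hw.2 hwz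
        refine ⟨hw.1, ?_⟩
        by_contra hmw
        exact hm.2 (not_le.1 hmw) hwlt
    have hfm : (Set.Icc y m).Finite := hem ▸ (hf.diff)
    have hcm : (Set.Icc y m).ncard = k + 1 := by
      have := Set.ncard_diff_singleton_add_one (show z ∈ Set.Icc y z from ⟨hle, le_rfl⟩) hf
      rw [hem]; omega
    have hpz : prX z = m := prX_eq hm
    rw [Function.iterate_succ_apply, hpz]
    exact ih hym hfm hcm

lemma succ_iter_eq : ∀ (k : ℕ) {y z : X}, z ≤ y → (Set.Icc z y).Finite →
    (Set.Icc z y).ncard = k + 1 → suX^[k] z = y := by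
  intro k
  induction k with
  | zero =>
    intro y z hle hf hc
    rcases eq_or_lt_of_le hle with he | hlt
    · simp [he]
    · exfalso
      have hsub : ({z, y} : Set X) ⊆ Set.Icc z y := by
        intro w hw; rcases hw with rfl | rfl
        · exact ⟨le_rfl, hle⟩
        · exact ⟨hle, le_rfl⟩
      have h2 : ({z, y} : Set X).ncard = 2 := Set.ncard_pair hlt.ne
      have := Set.ncard_le_ncard hsub hf
      omega
  | succ k ih =>
    intro y z hle hf hc
    have hne : z ≠ y := by
      rintro rfl
      rw [Set.Icc_self, Set.ncard_singleton] at hc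
      omega
    have hlt : z < y := lt_of_le_of_ne hle hne
    obtain ⟨m, hmy, hm⟩ := exists_covBy_above hlt hf
    have hem : Set.Icc m y = Set.Icc z y \ {z} := by
      ext w
      constructor
      · intro hw
        exact ⟨⟨hm.le.trans hw.1, hw.2⟩, fun he => absurd (he ▸ hw.1) (not_le.2 hm.lt)⟩
      · rintro ⟨hw, hwz⟩
        have hwlt : z < w := lt_of_le_of_ne hw.1 (Ne.symm hwz)
        refine ⟨?_, hw.2⟩
        by_contra hmw
        exact hm.2 hwlt (not_le.1 hmw)
    have hfm : (Set.Icc m y).Finite := hem ▸ (hf.diff)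
    have hcm : (Set.Icc m y).ncard = k + 1 := by
      have := Set.ncard_diff_singleton_add_one (show z ∈ Set.Icc z y from ⟨le_rfl, hle⟩) hf
      rw [hem]; omega
    have hsz : suX z = m := suX_eq hm
    rw [Function.iterate_succ_apply, hsz]
    exact ih hmy hfm hcm

lemma top_map {a b : X} (f : Set.Iic a ≃o Set.Iic b) : f ⟨a, le_rfl⟩ = ⟨b, le_rfl⟩ := by
  apply le_antisymm
  · exact (f ⟨a, le_rfl⟩).2
  · have h1 : f.symm ⟨b, le_rfl⟩ ≤ ⟨a, le_rfl⟩ := (f.symm ⟨b, le_rfl⟩).2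
    have := f.monotone h1
    rwa [OrderIso.apply_symm_apply] at this

lemma hasPred_transfer (hX : LowerOneTransitive X) {a : X} (h : ∃ w, w ⋖ a) (b : X) :
    ∃ w, w ⋖ b := by
  obtain ⟨w, hw⟩ := h
  obtain ⟨f⟩ := hX a b
  have hsymmtop : f.symm ⟨b, le_rfl⟩ = ⟨a, le_rfl⟩ := by
    rw [← top_map f, OrderIso.symm_apply_apply]
  refine ⟨(f ⟨w, hw.le⟩ : X), ?_, ?_⟩
  · have h1 : (⟨w, hw.le⟩ : Set.Iic a) < ⟨a, le_rfl⟩ := hw.lt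
    have h2 := f.strictMono h1
    rw [top_map f] at h2
    exact h2
  · intro c hc hcb
    have h1 : f ⟨w, hw.le⟩ < (⟨c, hcb.le⟩ : Set.Iic b) := hc
    have h2 : (⟨c, hcb.le⟩ : Set.Iic b) < ⟨b, le_rfl⟩ := hcb
    have g1 := f.symm.strictMono h1
    rw [OrderIso.symm_apply_apply] at g1
    have g2 := f.symm.strictMono h2
    rw [hsymmtop] at g2
    exact hw.2 g1 g2

end Aux

/-- In a lower 1-transitive linear order, each class of ∼fin is a singleton or
order-isomorphic to ℕᵒᵈ or to ℤ; if some class is a singleton then all are. -/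
theorem simFin_classes_of_lowerOneTransitive {X : Type*} [LinearOrder X]
    (hX : LowerOneTransitive X) :
    (∀ x : X,
      {y : X | SimFin y x} = {x} ∨
      Nonempty ({y : X | SimFin y x} ≃o ℕᵒᵈ) ∨
      Nonempty ({y : X | SimFin y x} ≃o ℤ)) ∧
    ((∃ x : X, {y : X | SimFin y x} = {x}) → ∀ x : X, {y : X | SimFin y x} = {x}) := by
  classical
  by_cases hP : ∀ z : X, ∃ w, w ⋖ z
  · -- every element has an immediate predecessor
    have hpr : ∀ z : X, prX z ⋖ z := fun z => prX_covBy (hP z)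
    have hsecond : (∃ x : X, {y : X | SimFin y x} = {x}) → ∀ x : X, {y : X | SimFin y x} = {x} := by
      rintro ⟨x, hx⟩
      exfalso
      have hmem : prX x ∈ {y : X | SimFin y x} := simFin_of_covBy (hpr x)
      rw [hx] at hmem
      exact absurd (hmem : prX x = x) (hpr x).lt.ne
    refine ⟨?_, hsecond⟩
    intro x
    set C := {y : X | SimFin y x} with hC
    have hxC : x ∈ C := simFin_refl x
    have hpC : ∀ y ∈ C, prX y ∈ C := fun y hy =>
      simFin_trans (simFin_of_covBy (hpr y)) hy
    by_cases hmax : ∃ m ∈ C, ∀ y ∈ C, y ≤ m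
    · -- class has a maximum : order type ω*
      right; left
      obtain ⟨m, hmC, hm⟩ := hmax
      have hmem : ∀ k : ℕ, prX^[k] m ∈ C := by
        intro k; induction k with
        | zero => exact hmC
        | succ k ih => rw [Function.iterate_succ_apply']; exact hpC _ ih
      have hanti : StrictAnti (fun k : ℕ => prX^[k] m) := by
        apply strictAnti_nat_of_succ_lt
        intro n
        rw [Function.iterate_succ_apply']
        exact (hpr _).lt
      let g : ℕᵒᵈ → C := fun k => ⟨prX^[OrderDual.ofDual k] m, hmem _⟩
      have hgmono : StrictMono g := by
        intro a b hab
        exact Subtype.mk_lt_mk.2 (hanti hab)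
      have hgsurj : Function.Surjective g := by
        rintro ⟨y, hy⟩
        have hym : y ≤ m := hm y hy
        have hsf : SimFin y m := simFin_trans hy (simFin_symm hmC)
        have hf : (Set.Icc y m).Finite := by
          have := simFin_iff_uIcc.1 hsf
          rwa [Set.uIcc_of_le hym] at this
        have hpos : 0 < (Set.Icc y m).ncard := Set.ncard_pos (hs := hf) |>.2 ⟨y, le_rfl, hym⟩
        obtain ⟨k, hk⟩ : ∃ k, (Set.Icc y m).ncard = k + 1 :=
          ⟨(Set.Icc y m).ncard - 1, by omega⟩
        refine ⟨OrderDual.toDual k, ?_⟩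
        exact Subtype.ext (pred_iter_eq k hym hf hk)
      exact ⟨(StrictMono.orderIsoOfSurjective g hgmono hgsurj).symm⟩
    · -- no maximum: order type ℤ
      right; right
      push_neg at hmax
      have hsu : ∀ y ∈ C, y ⋖ suX y ∧ suX y ∈ C := by
        intro y hy
        obtain ⟨z, hzC, hlt⟩ := hmax y hy
        have hsf : SimFin y z := simFin_trans hy (simFin_symm hzC)
        have hf : (Set.Icc y z).Finite := by
          have := simFin_iff_uIcc.1 hsf
          rwa [Set.uIcc_of_le hlt.le] at this
        obtain ⟨w, hwz, hw⟩ := exists_covBy_above hlt hf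
        have hse : suX y = w := suX_eq hw
        rw [hse]
        exact ⟨hw, simFin_trans (simFin_symm (simFin_of_covBy hw)) hy⟩
      have hmemS : ∀ k : ℕ, suX^[k] x ∈ C := by
        intro k; induction k with
        | zero => exact hxC
        | succ k ih => rw [Function.iterate_succ_apply']; exact (hsu _ ih).2
      have hmemP : ∀ k : ℕ, prX^[k] x ∈ C := by
        intro k; induction k with
        | zero => exact hxC
        | succ k ih => rw [Function.iterate_succ_apply']; exact hpC _ ih
      let h : ℤ → X := fun n => if 0 ≤ n then suX^[n.toNat] x else prX^[(-n).toNat] x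
      have hmemh : ∀ n : ℤ, h n ∈ C := by
        intro n
        by_cases h0 : 0 ≤ n
        · simp only [h, if_pos h0]; exact hmemS _
        · simp only [h, if_neg h0]; exact hmemP _
      let H : ℤ → C := fun n => ⟨h n, hmemh n⟩
      have hstep : ∀ n : ℤ, h n < h (n + 1) := by
        intro n
        by_cases h0 : 0 ≤ n
        · have h1 : 0 ≤ n + 1 := by omega
          have e1 : (n + 1).toNat = n.toNat + 1 := by omega
          simp only [h, if_pos h0, if_pos h1, e1, Function.iterate_succ_apply']
          exact (hsu _ (hmemS n.toNat)).1.lt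
        · by_cases h1 : 0 ≤ n + 1
          · have e0 : n = -1 := by omega
            subst e0
            norm_num [h]
            exact (hpr x).lt
          · have e1 : (-n).toNat = (-(n + 1)).toNat + 1 := by omega
            simp only [h, if_neg h0, if_neg h1, e1, Function.iterate_succ_apply']
            exact (hpr _).lt
      have hHmono : StrictMono H := by
        have := strictMono_int_of_lt_succ hstep
        intro a b hab
        exact Subtype.mk_lt_mk.2 (this hab)
      have hHsurj : Function.Surjective H := by
        rintro ⟨y, hy⟩
        rcases le_total x y with hle | hle
        · have hf : (Set.Icc x y).Finite := by
            have := simFin_iff_uIcc.1 (simFin_symm (hy : SimFin y x))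
            rwa [Set.uIcc_of_le hle] at this
          have hpos : 0 < (Set.Icc x y).ncard := Set.ncard_pos (hs := hf) |>.2 ⟨x, le_rfl, hle⟩
          obtain ⟨k, hk⟩ : ∃ k, (Set.Icc x y).ncard = k + 1 :=
            ⟨(Set.Icc x y).ncard - 1, by omega⟩
          refine ⟨(k : ℤ), Subtype.ext ?_⟩
          show h (k : ℤ) = y
          have e : h (k : ℤ) = suX^[k] x := by
            simp only [h, if_pos (Int.ofNat_nonneg k), Int.toNat_natCast]
          rw [e]
          exact succ_iter_eq k hle hf hk
        · have hf : (Set.Icc y x).Finite := by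
            have := simFin_iff_uIcc.1 (hy : SimFin y x)
            rwa [Set.uIcc_of_le hle] at this
          have hpos : 0 < (Set.Icc y x).ncard := Set.ncard_pos (hs := hf) |>.2 ⟨y, le_rfl, hle⟩
          obtain ⟨k, hk⟩ : ∃ k, (Set.Icc y x).ncard = k + 1 :=
            ⟨(Set.Icc y x).ncard - 1, by omega⟩
          refine ⟨(-(k : ℤ)), Subtype.ext ?_⟩
          show h (-(k : ℤ)) = y
          have hyk : prX^[k] x = y := pred_iter_eq k hle hf hk
          rcases Nat.eq_zero_or_pos k with rfl | hkpos
          · have e : h 0 = x := by simp [h]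
            simp only [Nat.cast_zero, neg_zero, e]
            simpa using hyk
          · have hneg : ¬ (0 : ℤ) ≤ -(k : ℤ) := by omega
            have e : h (-(k : ℤ)) = prX^[k] x := by
              simp only [h, if_neg hneg, neg_neg, Int.toNat_natCast]
            rw [e, hyk]
      exact ⟨(StrictMono.orderIsoOfSurjective H hHmono hHsurj).symm⟩
  · -- no element has an immediate predecessor
    push_neg at hP
    obtain ⟨z0, hz0⟩ := hP
    have hnone : ∀ z : X, ¬ ∃ w, w ⋖ z := by
      intro z hz
      obtain ⟨w, hw⟩ := hasPred_transfer hX hz z0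
      exact hz0 w hw
    have hsingle : ∀ x : X, {y : X | SimFin y x} = {x} := by
      intro x
      ext y
      simp only [Set.mem_setOf_eq, Set.mem_singleton_iff]
      constructor
      · intro hs
        by_contra hne
        rcases lt_or_gt_of_ne hne with hlt | hgt
        · have hf : (Set.Icc y x).Finite := by
            have := simFin_iff_uIcc.1 hs
            rwa [Set.uIcc_of_le hlt.le] at this
          obtain ⟨w, _, hw⟩ := exists_covBy_below hlt hf
          exact hnone x ⟨w, hw⟩
        · have hf : (Set.Icc x y).Finite := by
            have := simFin_iff_uIcc.1 (simFin_symm hs)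
            rwa [Set.uIcc_of_le hgt.le] at this
          obtain ⟨w, _, hw⟩ := exists_covBy_below hgt hf
          exact hnone y ⟨w, hw⟩
      · rintro rfl
        exact simFin_refl y
    exact ⟨fun x => Or.inl (hsingle x), fun _ => hsingle⟩
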